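/- Let X be a topological space, (M,d) a metric space, and let G be a subset of C(X,M) such that the closure of G in M^X is compact. Define an equivalence relation on X by x ∼ y if and only if g(x) = g(y) for all g ∈ G, let p : X → X̃ = X/∼ be the quotient map, for each g ∈ G let g̃ : X̃ → M be the induced map with g̃ ∘ p = g, and let X_G denote X̃ endowed with the initial topology generated by G̃ = { g̃ : g ∈ G }. Then the map p* : M^{X_G} → M^X defined by p*(h) = h ∘ p restricts to a homeomorphism of the closure of G̃ in M^{X_G} onto the closure of G in M^X. -/
import Mathlib


open Filter Topology Set

/-- Let `X` be a topological space, `(M, d)` a metric space, and `G ⊆ C(X, M)` with compact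
closure in `M^X`.  Let `p : X → X̃` be the quotient map of the equivalence relation
`x ∼ y ↔ ∀ g ∈ G, g x = g y` (presented here as a surjection `p` whose fibers are exactly the
equivalence classes), so that the induced maps `g̃` (`g̃ ∘ p = g`, `g ∈ G`) form the set
`G̃ = {h : X̃ → M | h ∘ p ∈ G}`, and endow `X̃` with the initial topology `X_G` generated
by `G̃`.  Then `p* : M^{X_G} → M^X`, `p*(h) = h ∘ p`, restricts to a homeomorphism of the
closure of `G̃` in `M^{X_G}` onto the closure of `G` in `M^X`. -/
theorem quotient_closure_homeomorph
    {X M : Type*} [TopologicalSpace X] [MetricSpace M]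
    (G : Set (X → M)) (hGcont : ∀ g ∈ G, Continuous g)
    (hGcomp : IsCompact (closure G))
    (XT : Type*) (p : X → XT) (hp : Function.Surjective p)
    (hker : ∀ x y : X, p x = p y ↔ ∀ g ∈ G, g x = g y) :
    letI : TopologicalSpace XT := TopologicalSpace.induced
      (fun xt => fun h : {h : XT → M | h ∘ p ∈ G} => h.1 xt) inferInstance
    ∃ e : ↥(closure {h : XT → M | h ∘ p ∈ G}) ≃ₜ ↥(closure G),
      ∀ h : ↥(closure {h : XT → M | h ∘ p ∈ G}), (e h : X → M) = h.1 ∘ p := by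
  classical
  letI : TopologicalSpace XT := TopologicalSpace.induced
      (fun xt => fun h : {h : XT → M | h ∘ p ∈ G} => h.1 xt) inferInstance
  set Gt : Set (XT → M) := {h : XT → M | h ∘ p ∈ G} with hGtdef
  set Φ : (XT → M) → (X → M) := fun h => h ∘ p with hΦdef
  -- a section of p
  set s : XT → X := Function.surjInv hp with hsdef
  have hps : ∀ xt, p (s xt) = xt := fun xt => Function.surjInv_eq hp xt
  have hΦinj : Function.Injective Φ := by
    intro h h' hh
    funext xt
    obtain ⟨x, rfl⟩ := hp xt
    exact congrFun hh x
  have hind : IsInducing Φ := by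
    constructor
    rw [Pi.topologicalSpace, Pi.topologicalSpace, induced_iInf]
    simp only [induced_compose]
    exact (hp.iInf_comp fun xt =>
      TopologicalSpace.induced (fun h : XT → M => h xt) inferInstance).symm
  have himg : Φ '' Gt = G := by
    apply Subset.antisymm
    · rintro _ ⟨h, hh, rfl⟩; exact hh
    · intro g hg
      refine ⟨g ∘ s, ?_, ?_⟩
      · show (g ∘ s) ∘ p ∈ G
        have : (g ∘ s) ∘ p = g := by
          funext x
          exact ((hker (s (p x)) x).mp (hps (p x))) g hg
        rwa [this]
      · funext x
        exact ((hker (s (p x)) x).mp (hps (p x))) g hg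
  have hclos : closure Gt = Φ ⁻¹' closure G := by
    rw [hind.closure_eq_preimage_closure_image, himg]
  have hmapsto : ∀ h ∈ closure Gt, Φ h ∈ closure G := by
    rw [hclos]; exact fun h hh => hh
  have hsurj : ∀ f ∈ closure G, ∃ h ∈ closure Gt, Φ h = f := by
    intro f hf
    have hconst : ∀ x y : X, p x = p y → f x = f y := by
      intro x y hxy
      have hcl : IsClosed {u : X → M | u x = u y} :=
        isClosed_eq (continuous_apply x) (continuous_apply y)
      have hGsub : G ⊆ {u : X → M | u x = u y} := fun g hg =>
        (hker x y).mp hxy g hg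
      exact (closure_minimal hGsub hcl) hf
    refine ⟨f ∘ s, ?_, ?_⟩
    · rw [hclos]
      show Φ (f ∘ s) ∈ closure G
      have : Φ (f ∘ s) = f := by
        funext x
        exact hconst _ _ (hps (p x))
      rwa [this]
    · funext x
      exact hconst _ _ (hps (p x))
  let e0 : ↥(closure Gt) ≃ ↥(closure G) :=
    { toFun := fun h => ⟨Φ h.1, hmapsto _ h.2⟩
      invFun := fun f => ⟨(hsurj f.1 f.2).choose, (hsurj f.1 f.2).choose_spec.1⟩
      left_inv := fun h => Subtype.ext (hΦinj ((hsurj (Φ h.1) (hmapsto _ h.2)).choose_spec.2))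
      right_inv := fun f => Subtype.ext (hsurj f.1 f.2).choose_spec.2 }
  refine ⟨{ toEquiv := e0, continuous_toFun := ?_, continuous_invFun := ?_ }, fun h => rfl⟩
  · exact Continuous.subtype_mk (hind.continuous.comp continuous_subtype_val) _
  · have hc : Continuous (fun f : ↥(closure G) => (hsurj f.1 f.2).choose) := by
      rw [hind.continuous_iff]
      have heq : Φ ∘ (fun f : ↥(closure G) => (hsurj f.1 f.2).choose) =
          fun f : ↥(closure G) => f.1 := by
        funext f
        exact (hsurj f.1 f.2).choose_spec.2
      rw [heq]
      exact continuous_subtype_val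
    exact hc.subtype_mk _
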